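/- Let p ∈ ℂ[s] be a polynomial with p(0) ≠ 0. Then there exists exactly one f ∈ ℂ((x)) of positive order satisfying df/dx = p(f); moreover this f lies in x·ℂ[[x]], has order exactly 1, and its leading coefficient (the coefficient of x) equals p(0). -/

import Mathlib

open PowerSeries

/-- Formal derivative of a Laurent series. -/
noncomputable def lsDeriv {A : Type*} [Ring A] (f : LaurentSeries A) : LaurentSeries A where
  coeff k := (k + 1) • f.coeff (k + 1)
  isPWO_support' := by
    refine (f.isPWO_support.image_of_monotone
      (f := fun m : ℤ => m - 1) (fun a b h => by simpa using h)).mono ?_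
    intro k hk
    have hk' : f.coeff (k + 1) ≠ 0 := by
      intro h
      simp [Function.mem_support, h] at hk
    exact ⟨k + 1, hk', by ring⟩

lemma lsDeriv_coeff {A : Type*} [Ring A] (f : LaurentSeries A) (k : ℤ) :
    (lsDeriv f).coeff k = (k + 1) • f.coeff (k + 1) := rfl

/-- Coefficients of the solution, defined by recursion. -/
noncomputable def solCoeff (p : Polynomial ℂ) : ℕ → ℂ
  | 0 => 0
  | (n+1) =>
    (PowerSeries.coeff n (Polynomial.aeval
      (PowerSeries.mk fun i => if h : i < n + 1 then solCoeff p i else 0) p)) / (n + 1)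
  termination_by n => n
  decreasing_by exact h

lemma aeval_coeff_congr (p : Polynomial ℂ) {A B : PowerSeries ℂ} {n : ℕ}
    (h : ∀ i ≤ n, PowerSeries.coeff i A = PowerSeries.coeff i B) :
    ∀ i ≤ n, PowerSeries.coeff i (Polynomial.aeval A p)
      = PowerSeries.coeff i (Polynomial.aeval B p) := by
  have hdvd : (X : PowerSeries ℂ) ^ (n+1) ∣ A - B := by
    rw [PowerSeries.X_pow_dvd_iff]
    intro m hm
    simp [h m (Nat.lt_succ_iff.mp hm), sub_eq_zero]
  have h2 : (X : PowerSeries ℂ) ^ (n+1) ∣ Polynomial.aeval A p - Polynomial.aeval B p := by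
    refine hdvd.trans ?_
    have := Polynomial.sub_dvd_eval_sub A B (p.map (algebraMap ℂ (PowerSeries ℂ)))
    rwa [Polynomial.eval_map, Polynomial.eval_map, ← Polynomial.aeval_def,
      ← Polynomial.aeval_def] at this
  intro i hi
  have := (PowerSeries.X_pow_dvd_iff.mp h2) i (Nat.lt_succ_of_le hi)
  rw [map_sub, sub_eq_zero] at this
  exact this

lemma ofPS_coeff_neg (F : PowerSeries ℂ) {k : ℤ} (hk : k < 0) :
    (HahnSeries.ofPowerSeries ℤ ℂ F).coeff k = 0 := by
  rw [HahnSeries.ofPowerSeries_apply]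
  apply HahnSeries.embDomain_notin_range
  rintro ⟨n, hn⟩
  simp at hn
  omega

lemma ofPS_coeff_nonpos (F : PowerSeries ℂ) (h0 : PowerSeries.coeff 0 F = 0)
    {k : ℤ} (hk : k ≤ 0) : (HahnSeries.ofPowerSeries ℤ ℂ F).coeff k = 0 := by
  rcases lt_or_eq_of_le hk with hk' | hk'
  · exact ofPS_coeff_neg F hk'
  · subst hk'
    have := HahnSeries.ofPowerSeries_apply_coeff (Γ := ℤ) F 0
    simpa [h0] using this

lemma eq_ofPS {g : LaurentSeries ℂ} (h0 : ∀ k : ℤ, k < 0 → g.coeff k = 0) :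
    HahnSeries.ofPowerSeries ℤ ℂ (PowerSeries.mk fun n => g.coeff n) = g := by
  ext k
  rcases le_or_gt 0 k with hk | hk
  · obtain ⟨n, rfl⟩ := Int.eq_ofNat_of_zero_le hk
    rw [HahnSeries.ofPowerSeries_apply_coeff]
    simp
  · rw [ofPS_coeff_neg _ hk, h0 k hk]

lemma ofPS_aeval (p : Polynomial ℂ) (F : PowerSeries ℂ) :
    HahnSeries.ofPowerSeries ℤ ℂ (Polynomial.aeval F p) =
      Polynomial.aeval (HahnSeries.ofPowerSeries ℤ ℂ F) p := by
  rw [Polynomial.aeval_def, Polynomial.aeval_def, Polynomial.hom_eval₂]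
  congr 1

lemma constCoeff_aeval (p : Polynomial ℂ) (A : PowerSeries ℂ)
    (hA : PowerSeries.constantCoeff A = 0) :
    PowerSeries.coeff 0 (Polynomial.aeval A p) = p.coeff 0 := by
  rw [coeff_zero_eq_constantCoeff]
  rw [Polynomial.aeval_def, Polynomial.hom_eval₂, hA, Polynomial.eval₂_at_zero]
  simp [PowerSeries.algebraMap_apply]

lemma ode_coeff (p : Polynomial ℂ) (G : PowerSeries ℂ)
    (hode : lsDeriv (HahnSeries.ofPowerSeries ℤ ℂ G)
      = Polynomial.aeval (HahnSeries.ofPowerSeries ℤ ℂ G) p) (n : ℕ) :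
    ((n : ℂ) + 1) * PowerSeries.coeff (n + 1) G
      = PowerSeries.coeff n (Polynomial.aeval G p) := by
  have := congrArg (fun h : LaurentSeries ℂ => h.coeff (n : ℤ)) hode
  simp only [lsDeriv_coeff] at this
  rw [← ofPS_aeval, HahnSeries.ofPowerSeries_apply_coeff] at this
  have hc : ((n : ℤ) + 1) = ((n + 1 : ℕ) : ℤ) := by push_cast; ring
  rw [hc, HahnSeries.ofPowerSeries_apply_coeff] at this
  rw [← this, zsmul_eq_mul]
  push_cast
  ring

lemma coeff_ode (p : Polynomial ℂ) (G : PowerSeries ℂ) (h0 : PowerSeries.coeff 0 G = 0)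
    (h : ∀ n : ℕ, ((n : ℂ) + 1) * PowerSeries.coeff (n + 1) G
      = PowerSeries.coeff n (Polynomial.aeval G p)) :
    lsDeriv (HahnSeries.ofPowerSeries ℤ ℂ G)
      = Polynomial.aeval (HahnSeries.ofPowerSeries ℤ ℂ G) p := by
  rw [← ofPS_aeval]
  ext k
  rw [lsDeriv_coeff]
  rcases le_or_gt 0 k with hk | hk
  · obtain ⟨n, rfl⟩ := Int.eq_ofNat_of_zero_le hk
    have hc : ((n : ℤ) + 1) = ((n + 1 : ℕ) : ℤ) := by push_cast; ring
    rw [hc, HahnSeries.ofPowerSeries_apply_coeff, HahnSeries.ofPowerSeries_apply_coeff,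
      zsmul_eq_mul, ← h n]
    push_cast
    ring
  · rw [ofPS_coeff_neg _ hk, ofPS_coeff_nonpos _ h0 (by omega : k + 1 ≤ 0), smul_zero]

noncomputable def solF (p : Polynomial ℂ) : PowerSeries ℂ := PowerSeries.mk (solCoeff p)

lemma solF_coeff (p : Polynomial ℂ) (n : ℕ) :
    PowerSeries.coeff n (solF p) = solCoeff p n := PowerSeries.coeff_mk n _

lemma solF_ode (p : Polynomial ℂ) (n : ℕ) :
    ((n : ℂ) + 1) * PowerSeries.coeff (n + 1) (solF p)
      = PowerSeries.coeff n (Polynomial.aeval (solF p) p) := by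
  have htr : PowerSeries.coeff n (Polynomial.aeval
      (PowerSeries.mk fun i => if h : i < n + 1 then solCoeff p i else 0) p)
      = PowerSeries.coeff n (Polynomial.aeval (solF p) p) := by
    refine aeval_coeff_congr p ?_ n le_rfl
    intro i hi
    rw [PowerSeries.coeff_mk, solF_coeff, dif_pos (Nat.lt_succ_of_le hi)]
  rw [solF_coeff, solCoeff, htr]
  have hne : ((n : ℂ) + 1) ≠ 0 := Nat.cast_add_one_ne_zero n
  field_simp

lemma coeff_unique (p : Polynomial ℂ) {G1 G2 : PowerSeries ℂ}
    (h01 : PowerSeries.coeff 0 G1 = 0) (h02 : PowerSeries.coeff 0 G2 = 0)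
    (r1 : ∀ n : ℕ, ((n : ℂ) + 1) * PowerSeries.coeff (n + 1) G1
      = PowerSeries.coeff n (Polynomial.aeval G1 p))
    (r2 : ∀ n : ℕ, ((n : ℂ) + 1) * PowerSeries.coeff (n + 1) G2
      = PowerSeries.coeff n (Polynomial.aeval G2 p)) : G1 = G2 := by
  have key : ∀ n : ℕ, ∀ i ≤ n, PowerSeries.coeff i G1 = PowerSeries.coeff i G2 := by
    intro n
    induction n with
    | zero =>
      intro i hi
      rw [Nat.le_zero.mp hi, h01, h02]
    | succ n ih =>
      intro i hi
      rcases Nat.lt_succ_iff_lt_or_eq.mp (Nat.lt_succ_of_le hi) with hi' | hi'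
      · exact ih i (Nat.lt_succ_iff.mp hi')
      · subst hi'
        have hcong := aeval_coeff_congr p ih n le_rfl
        have := (r1 n).trans (hcong.trans (r2 n).symm)
        exact mul_left_cancel₀ (Nat.cast_add_one_ne_zero n) this
  ext n
  exact key n n le_rfl

lemma order_pos_of_coeff {f : LaurentSeries ℂ} (hne : f ≠ 0)
    (h : ∀ k : ℤ, k ≤ 0 → f.coeff k = 0) : 0 < f.order := by
  by_contra hc
  exact hne (HahnSeries.coeff_order_eq_zero.mp (h _ (not_lt.mp hc)))

/-- Let `p ∈ ℂ[s]` with `p(0) ≠ 0`.  There is exactly one `f ∈ ℂ((x))` of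
positive order with `df/dx = p(f)`; moreover this `f` lies in `x·ℂ[[x]]`, has order
exactly `1`, and its leading coefficient (the coefficient of `x`) is `p(0)`. -/
theorem stmt_5 (p : Polynomial ℂ) (hp : p.coeff 0 ≠ 0) :
    (∃! f : LaurentSeries ℂ, f ≠ 0 ∧ 0 < f.order ∧ lsDeriv f = Polynomial.aeval f p) ∧
    (∀ f : LaurentSeries ℂ, (f ≠ 0 ∧ 0 < f.order ∧ lsDeriv f = Polynomial.aeval f p) →
      (∀ k : ℤ, k ≤ 0 → f.coeff k = 0) ∧ f.order = 1 ∧ f.coeff 1 = p.coeff 0) := by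
  -- properties of solF
  have h0F : PowerSeries.coeff 0 (solF p) = 0 := by rw [solF_coeff, solCoeff]
  set f : LaurentSeries ℂ := HahnSeries.ofPowerSeries ℤ ℂ (solF p) with hf
  have hodef : lsDeriv f = Polynomial.aeval f p := coeff_ode p (solF p) h0F (solF_ode p)
  have hcoeff1 : f.coeff 1 = p.coeff 0 := by
    have h1 := solF_ode p 0
    rw [constCoeff_aeval p (solF p) (by rw [← coeff_zero_eq_constantCoeff]; exact h0F)] at h1
    have : PowerSeries.coeff 1 (solF p) = p.coeff 0 := by
      rw [← h1]; push_cast; ring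
    have h2 := HahnSeries.ofPowerSeries_apply_coeff (Γ := ℤ) (solF p) 1
    rw [this] at h2
    simpa using h2
  have hfk : ∀ k : ℤ, k ≤ 0 → f.coeff k = 0 := fun k hk => ofPS_coeff_nonpos _ h0F hk
  have hne : f ≠ 0 := by
    intro h
    rw [h] at hcoeff1
    simp at hcoeff1
    exact hp hcoeff1.symm
  have hord : 0 < f.order := order_pos_of_coeff hne hfk
  -- uniqueness: any solution equals f
  have huniq : ∀ g : LaurentSeries ℂ,
      (g ≠ 0 ∧ 0 < g.order ∧ lsDeriv g = Polynomial.aeval g p) → g = f := by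
    rintro g ⟨hgne, hgord, hgode⟩
    have hgk : ∀ k : ℤ, k ≤ 0 → g.coeff k = 0 := fun k hk =>
      HahnSeries.coeff_eq_zero_of_lt_order (lt_of_le_of_lt hk hgord)
    set G : PowerSeries ℂ := PowerSeries.mk fun n => g.coeff n with hGdef
    have hG : HahnSeries.ofPowerSeries ℤ ℂ G = g := eq_ofPS (fun k hk => hgk k hk.le)
    have h0G : PowerSeries.coeff 0 G = 0 := by
      rw [hGdef, PowerSeries.coeff_mk]
      exact hgk 0 le_rfl
    have hrG := ode_coeff p G (by rw [hG]; exact hgode)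
    have hrF := solF_ode p
    have : G = solF p := coeff_unique p h0G h0F hrG hrF
    rw [← hG, this]
  refine ⟨⟨f, ⟨hne, hord, hodef⟩, huniq⟩, ?_⟩
  intro g hg
  have hgeq := huniq g hg
  subst hgeq
  refine ⟨hfk, ?_, hcoeff1⟩
  have hle : f.order ≤ 1 := HahnSeries.order_le_of_coeff_ne_zero (by rw [hcoeff1]; exact hp)
  omega
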